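/- Fix integers N ≥ 1 and k ≥ 0. Let R = (ℂ[p]/(p^N))[λ] and let S = R[ħ,ħ^{-1}] be the ring of Laurent polynomials in ħ over R. For every integer m ≥ 1 the element p + mħ is invertible in S (since p is nilpotent). Define I = Σ_{d≥0} I_d Q^d ∈ S[[Q]], where I_d := (Π_{m=1}^{kd} (kp + mħ + λ)) · (Π_{m=1}^{d} (p + mħ))^{-N}, and let D be the operator on S[[Q]] given by D(f) = ħ Q (df/dQ) + p·f. Then D^N I = Q · Π_{m=1}^{k} (kD + mħ + λ) (I), where the k commuting operators kD + mħ + λ are composed and the result is multiplied by Q. -/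

import Mathlib

noncomputable section

/-- `ℂ[p]/(p^N)`: the cohomology ring of `ℙ^{N-1}`. -/
abbrev QuotR (N : ℕ) : Type :=
  Polynomial ℂ ⧸ Ideal.span ({(Polynomial.X : Polynomial ℂ) ^ N} : Set (Polynomial ℂ))

/-- `R = (ℂ[p]/(p^N))[λ]`. -/
abbrev Rr (N : ℕ) : Type := Polynomial (QuotR N)

/-- `S = R[ħ, ħ⁻¹]`: Laurent polynomials in `ħ` over `R`. -/
abbrev Sr (N : ℕ) : Type := LaurentPolynomial (Rr N)

instance instCommRingSr (N : ℕ) : CommRing (Sr N) :=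
  @AddMonoidAlgebra.commRing (Rr N) ℤ inferInstance inferInstance

/-- The (nilpotent) class `p ∈ S`. -/
def pS (N : ℕ) : Sr N :=
  LaurentPolynomial.C (Polynomial.C
    (Ideal.Quotient.mk _ (Polynomial.X : Polynomial ℂ)))

/-- The equivariant parameter `λ ∈ S`. -/
def lamS (N : ℕ) : Sr N := LaurentPolynomial.C (Polynomial.X : Rr N)

/-- The element `ħ ∈ S`. -/
def hbarS (N : ℕ) : Sr N := LaurentPolynomial.T 1

/-- The coefficient `I_d = (Π_{m=1}^{kd} (kp + mħ + λ)) · (Π_{m=1}^{d} (p + mħ))^{-N}`. -/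
def Icoeff (N k : ℕ) (d : ℕ) : Sr N :=
  (∏ m ∈ Finset.Icc 1 (k * d), ((k : Sr N) * pS N + (m : Sr N) * hbarS N + lamS N)) *
    (Ring.inverse (∏ m ∈ Finset.Icc 1 d, (pS N + (m : Sr N) * hbarS N))) ^ N

/-- The `I`-function `I = Σ_{d ≥ 0} I_d Q^d ∈ S[[Q]]`. -/
def Ifun (N k : ℕ) : PowerSeries (Sr N) := PowerSeries.mk (Icoeff N k)

/-- The operator `D = ħ Q d/dQ + p` on `S[[Q]]` (coefficientwise:
`(D f)_d = (ħ·d + p)·f_d`). -/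
def Dop (N : ℕ) (f : PowerSeries (Sr N)) : PowerSeries (Sr N) :=
  PowerSeries.mk fun d =>
    hbarS N * (d : Sr N) * PowerSeries.coeff d f + pS N * PowerSeries.coeff d f

/-- The operator `kD + mħ + λ` on `S[[Q]]`. -/
def Eop (N k : ℕ) (m : ℕ) (f : PowerSeries (Sr N)) : PowerSeries (Sr N) :=
  PowerSeries.C (k : Sr N) * Dop N f
    + PowerSeries.C ((m : Sr N) * hbarS N + lamS N) * f

/-- The composite operator `Π_{m=1}^{j} (kD + mħ + λ)`. -/
def EComp (N k : ℕ) : ℕ → PowerSeries (Sr N) → PowerSeries (Sr N)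
  | 0 => id
  | j + 1 => fun f => Eop N k (j + 1) (EComp N k j f)

/- ### Auxiliary lemmas -/

lemma pS_pow_eq_zero (N : ℕ) : pS N ^ N = 0 := by
  have h0 : (Ideal.Quotient.mk (Ideal.span ({(Polynomial.X : Polynomial ℂ) ^ N} :
      Set (Polynomial ℂ))) (Polynomial.X : Polynomial ℂ)) ^ N = 0 := by
    rw [← map_pow, Ideal.Quotient.eq_zero_iff_mem]
    exact Ideal.subset_span rfl
  unfold pS
  rw [← map_pow, ← map_pow, h0, map_zero, map_zero]

lemma isUnit_p_add (N : ℕ) : ∀ m : ℕ, 1 ≤ m → IsUnit (pS N + (m : Sr N) * hbarS N) := by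
  intro m hm
  have hnil : IsNilpotent (pS N) := ⟨N, pS_pow_eq_zero N⟩
  have hmC : IsUnit ((m : ℂ)) := isUnit_iff_ne_zero.mpr (Nat.cast_ne_zero.mpr (by omega))
  have hmS : IsUnit ((m : Sr N)) := by
    have := hmC.map (algebraMap ℂ (Sr N))
    rwa [map_natCast] at this
  have hu : IsUnit ((m : Sr N) * hbarS N) := hmS.mul (LaurentPolynomial.isUnit_T 1)
  exact hnil.isUnit_add_right_of_commute hu (Commute.all _ _)

lemma coeff_Dop_iter (N n d : ℕ) (f : PowerSeries (Sr N)) :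
    PowerSeries.coeff d ((Dop N)^[n] f) =
      (hbarS N * (d : Sr N) + pS N) ^ n * PowerSeries.coeff d f := by
  induction n with
  | zero => simp
  | succ n ih =>
    rw [Function.iterate_succ_apply', Dop, PowerSeries.coeff_mk, ih, pow_succ]
    ring

lemma coeff_EComp (N k j d : ℕ) (f : PowerSeries (Sr N)) :
    PowerSeries.coeff d (EComp N k j f) =
      (∏ m ∈ Finset.Ioc 0 j,
          ((k : Sr N) * pS N + ((k * d + m : ℕ) : Sr N) * hbarS N + lamS N)) *
        PowerSeries.coeff d f := by
  induction j with
  | zero => simp [EComp]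
  | succ j ih =>
    show PowerSeries.coeff d (Eop N k (j + 1) (EComp N k j f)) = _
    rw [Eop, map_add, PowerSeries.coeff_C_mul, PowerSeries.coeff_C_mul, Dop,
      PowerSeries.coeff_mk, ih, Finset.prod_Ioc_succ_top (Nat.zero_le j)]
    push_cast
    ring

lemma Icc_one_eq_Ioc (n : ℕ) : Finset.Icc 1 n = Finset.Ioc 0 n := rfl

lemma prod_shift (N k e : ℕ) :
    (∏ m ∈ Finset.Ioc (k * e) (k * e + k),
        ((k : Sr N) * pS N + (m : Sr N) * hbarS N + lamS N)) =
      ∏ m ∈ Finset.Ioc 0 k,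
        ((k : Sr N) * pS N + ((k * e + m : ℕ) : Sr N) * hbarS N + lamS N) := by
  have h := Finset.map_add_left_Ioc 0 k (k * e)
  rw [Nat.add_zero] at h
  rw [← h, Finset.prod_map]
  simp [addLeftEmbedding]

lemma key_identity (N k e : ℕ) :
    (hbarS N * ((e + 1 : ℕ) : Sr N) + pS N) ^ N * Icoeff N k (e + 1) =
      (∏ m ∈ Finset.Ioc 0 k,
          ((k : Sr N) * pS N + ((k * e + m : ℕ) : Sr N) * hbarS N + lamS N)) *
        Icoeff N k e := by
  have hw : IsUnit (pS N + ((e + 1 : ℕ) : Sr N) * hbarS N) :=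
    isUnit_p_add N (e + 1) (by omega)
  simp only [Icoeff, Icc_one_eq_Ioc]
  have hke : k * (e + 1) = k * e + k := by ring
  rw [hke,
    ← Finset.prod_Ioc_consecutive
      (fun m => ((k : Sr N) * pS N + (m : Sr N) * hbarS N + lamS N))
      (Nat.zero_le (k * e)) (Nat.le_add_right (k * e) k),
    prod_shift,
    Finset.prod_Ioc_succ_top (Nat.zero_le e)
      (fun m => (pS N + (m : Sr N) * hbarS N)),
    Ring.mul_inverse_rev, mul_pow]
  have hcancel : (pS N + ((e + 1 : ℕ) : Sr N) * hbarS N) ^ N *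
      (Ring.inverse (pS N + ((e + 1 : ℕ) : Sr N) * hbarS N)) ^ N = 1 := by
    rw [← mul_pow, Ring.mul_inverse_cancel _ hw, one_pow]
  calc (hbarS N * ((e + 1 : ℕ) : Sr N) + pS N) ^ N *
        ((∏ m ∈ Finset.Ioc 0 (k * e),
            ((k : Sr N) * pS N + (m : Sr N) * hbarS N + lamS N)) *
          (∏ m ∈ Finset.Ioc 0 k,
            ((k : Sr N) * pS N + ((k * e + m : ℕ) : Sr N) * hbarS N + lamS N)) *
          ((Ring.inverse (pS N + ((e + 1 : ℕ) : Sr N) * hbarS N)) ^ N *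
            (Ring.inverse (∏ m ∈ Finset.Ioc 0 e, (pS N + (m : Sr N) * hbarS N))) ^ N))
      = ((pS N + ((e + 1 : ℕ) : Sr N) * hbarS N) ^ N *
          (Ring.inverse (pS N + ((e + 1 : ℕ) : Sr N) * hbarS N)) ^ N) *
        ((∏ m ∈ Finset.Ioc 0 k,
            ((k : Sr N) * pS N + ((k * e + m : ℕ) : Sr N) * hbarS N + lamS N)) *
          ((∏ m ∈ Finset.Ioc 0 (k * e),
            ((k : Sr N) * pS N + (m : Sr N) * hbarS N + lamS N)) *
            (Ring.inverse (∏ m ∈ Finset.Ioc 0 e, (pS N + (m : Sr N) * hbarS N))) ^ N)) := by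
        ring
    _ = _ := by rw [hcancel, one_mul]

/-- the Picard–Fuchs relation `D^N I = Q · Π_{m=1}^{k}(kD + mħ + λ) I`
satisfied by the equivariantly twisted `I`-function of `(ℙ^{N-1}, 𝒪(k))`; moreover
`p + mħ` is invertible in `S` for every `m ≥ 1`. -/
theorem statement9 (N k : ℕ) (hN : 1 ≤ N) :
    (∀ m : ℕ, 1 ≤ m → IsUnit (pS N + (m : Sr N) * hbarS N)) ∧
    (Dop N)^[N] (Ifun N k) = PowerSeries.X * EComp N k k (Ifun N k) := by
  refine ⟨isUnit_p_add N, ?_⟩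
  refine PowerSeries.ext fun d => ?_
  rw [coeff_Dop_iter]
  cases d with
  | zero =>
    rw [PowerSeries.coeff_zero_X_mul, Ifun, PowerSeries.coeff_mk]
    have h0 : Icoeff N k 0 = 1 := by simp [Icoeff]
    rw [h0, mul_one, Nat.cast_zero, mul_zero, zero_add, pS_pow_eq_zero]
  | succ e =>
    rw [PowerSeries.coeff_succ_X_mul, coeff_EComp, Ifun, PowerSeries.coeff_mk,
      PowerSeries.coeff_mk]
    exact key_identity N k e
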